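/- arXiv:1603.02133 — 2 statements merged into one kernel-verified Lean document; each statement's English description precedes it below -/
import Mathlib

section
/- For a finite set X, the canonical evaluation map ℓ∞(X) → ℓ∞(Char(ℓ∞(X))), sending f to the function φ ↦ φ(f), is a *-algebra isomorphism. (The counit of the adjunction nsp ⊣ ℓ∞ is an isomorphism.) -/
noncomputable section

/-- Evaluation at a point as a character. -/
def evalChar (X : Type*) (x : X) : (X → ℂ) →⋆ₐ[ℂ] ℂ :=
  { Pi.evalAlgHom ℂ (fun _ => ℂ) x with map_star' := fun _ => rfl }

theorem char_eq_eval {X : Type*} [Fintype X] (φ : (X → ℂ) →⋆ₐ[ℂ] ℂ) :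
    ∃ x : X, ∀ f : X → ℂ, φ f = f x := by
  classical
  set δ : X → X → ℂ := fun x y => if y = x then 1 else 0 with hδ
  have hsum : ∑ x, δ x = 1 := by
    funext y
    simp [δ, Finset.sum_apply]
  have h1 : ∑ x, φ (δ x) = 1 := by
    rw [← map_sum, hsum, map_one]
  obtain ⟨x, hx⟩ : ∃ x, φ (δ x) ≠ 0 := by
    by_contra h
    push_neg at h
    simp [h] at h1
  have hidem : φ (δ x) * φ (δ x) = φ (δ x) := by
    rw [← map_mul]; congr 1; funext y
    simp only [δ, Pi.mul_apply]
    split <;> simp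
  have hone : φ (δ x) = 1 := by
    have := mul_right_cancel₀ hx (hidem.trans (one_mul (φ (δ x))).symm)
    exact this
  refine ⟨x, fun f => ?_⟩
  have hmul : f * δ x = f x • δ x := by
    funext y
    simp only [δ, Pi.mul_apply, Pi.smul_apply, smul_eq_mul]
    split
    · rename_i h; subst h; ring
    · ring
  have := congrArg φ hmul
  rw [map_mul, map_smul, hone, mul_one, smul_eq_mul, mul_one] at this
  exact this

/-- The evaluation star-algebra homomorphism. -/
def evalHom (X : Type*) : (X → ℂ) →⋆ₐ[ℂ] (((X → ℂ) →⋆ₐ[ℂ] ℂ) → ℂ) where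
  toFun f := fun φ => φ f
  map_one' := funext fun φ => map_one φ
  map_mul' f g := funext fun φ => map_mul φ f g
  map_zero' := funext fun φ => map_zero φ
  map_add' f g := funext fun φ => map_add φ f g
  commutes' c := funext fun φ => AlgHomClass.commutes φ c
  map_star' f := funext fun φ => map_star φ f

theorem evalHom_bijective (X : Type*) [Fintype X] : Function.Bijective (evalHom X) := by
  constructor
  · intro f g h
    funext x
    have := congrFun h (evalChar X x)
    exact this
  · intro F
    refine ⟨fun x => F (evalChar X x), ?_⟩
    funext φ
    obtain ⟨x, hx⟩ := char_eq_eval φ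
    have hφ : φ = evalChar X x := by
      apply DFunLike.ext
      intro f
      exact hx f
    show φ (fun x => F (evalChar X x)) = F φ
    rw [hx, hφ]

/-- For a finite set `X`, the evaluation map `ℓ∞(X) → ℓ∞(Char(ℓ∞(X)))`,
`f ↦ (φ ↦ φ f)`, is a *-algebra isomorphism. -/
theorem counit_iso (X : Type*) [Fintype X] :
    ∃ e : (X → ℂ) ≃⋆ₐ[ℂ] (((X → ℂ) →⋆ₐ[ℂ] ℂ) → ℂ),
      ∀ (f : X → ℂ) (φ : (X → ℂ) →⋆ₐ[ℂ] ℂ), e f φ = φ f := by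
  refine ⟨StarAlgEquiv.ofBijective (evalHom X) (evalHom_bijective X), fun f φ => rfl⟩
end
end

section
/- For n ≥ 2, the matrix algebra Mₙ(ℂ) admits no duplicator: there is no positive unital linear map μ : Mₙ(ℂ) ⊗ Mₙ(ℂ) → Mₙ(ℂ) with μ(1 ⊗ a) = a = μ(a ⊗ 1) for all a and μ(a ⊗ μ(b ⊗ c)) = μ(μ(a ⊗ b) ⊗ c) for all a, b, c. -/
set_option linter.unusedSectionVars false
set_option linter.unusedVariables false
set_option linter.unreachableTactic false
set_option linter.unusedTactic false

open scoped ComplexOrder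
open Kronecker Matrix

namespace NoDupAux

variable {m p : Type*} [Fintype m] [Fintype p]

lemma vmv_mulVec (u w x : m → ℂ) : vecMulVec u w *ᵥ x = (w ⬝ᵥ x) • u := by
  ext i
  simp only [Matrix.mulVec, Matrix.vecMulVec_apply, dotProduct, Pi.smul_apply,
    smul_eq_mul, Finset.sum_mul]
  exact Finset.sum_congr rfl fun j _ => by ring

lemma vmv_mul [DecidableEq m] (a b c d : m → ℂ) :
    vecMulVec a b * vecMulVec c d = (b ⬝ᵥ c) • vecMulVec a d := by
  ext i j
  simp [Matrix.mul_apply, Matrix.vecMulVec_apply, dotProduct, Finset.sum_mul,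
    Finset.mul_sum, mul_assoc, mul_comm, mul_left_comm]

lemma vmv_herm (v : m → ℂ) : (vecMulVec v (star v))ᴴ = vecMulVec v (star v) := by
  ext i j
  simp [Matrix.conjTranspose_apply, Matrix.vecMulVec_apply, mul_comm]

lemma vmv_add_left (a b c : m → ℂ) (d : p → ℂ) :
    vecMulVec (a + b) (d) = vecMulVec a d + vecMulVec b d := by
  ext i j; simp [Matrix.vecMulVec_apply]; ring

lemma vmv_add_right (a : m → ℂ) (c d : p → ℂ) :
    vecMulVec a (c + d) = vecMulVec a c + vecMulVec a d := by
  ext i j; simp [Matrix.vecMulVec_apply]; ring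

lemma vmv_smul_left (t : ℂ) (a : m → ℂ) (d : p → ℂ) :
    vecMulVec (t • a) d = t • vecMulVec a d := by
  ext i j; simp [Matrix.vecMulVec_apply]; ring

lemma vmv_smul_right (t : ℂ) (a : m → ℂ) (d : p → ℂ) :
    vecMulVec a (t • d) = t • vecMulVec a d := by
  ext i j; simp [Matrix.vecMulVec_apply]; ring

lemma psd_of_proj [DecidableEq m] {M : Matrix m m ℂ} (h1 : Mᴴ = M) (h2 : M * M = M) :
    M.PosSemidef := by
  have h3 : Mᴴ * M = M := by rw [h1, h2]
  exact h3 ▸ Matrix.posSemidef_conjTranspose_mul_self M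

lemma psd_vmv (v : m → ℂ) : (vecMulVec v (star v)).PosSemidef := by
  rw [Matrix.posSemidef_iff_dotProduct_mulVec]
  constructor
  · exact (vmv_herm v)
  · intro x
    rw [vmv_mulVec, dotProduct_smul, Matrix.star_dotProduct, smul_eq_mul]
    exact star_mul_self_nonneg _

lemma kron_conjT {l q : Type*} (A : Matrix m l ℂ) (B : Matrix p q ℂ) :
    (A ⊗ₖ B)ᴴ = Aᴴ ⊗ₖ Bᴴ := by
  ext ⟨i, j⟩ ⟨k, l⟩
  simp [Matrix.conjTranspose_apply, Matrix.kroneckerMap_apply]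

lemma psd_kron [DecidableEq m] [DecidableEq p] {A : Matrix m m ℂ} {B : Matrix p p ℂ}
    (hA : A.PosSemidef) (hB : B.PosSemidef) : (A ⊗ₖ B).PosSemidef := by
  exact hA.kronecker hB

lemma qf_zero_of_le {M F : Matrix m m ℂ} (hM : M.PosSemidef) (hFM : (F - M).PosSemidef)
    {x : m → ℂ} (hx : star x ⬝ᵥ F *ᵥ x = 0) : M *ᵥ x = 0 := by
  have h1 := hM.dotProduct_mulVec_nonneg x
  have h2 := hFM.dotProduct_mulVec_nonneg x
  rw [Matrix.sub_mulVec, dotProduct_sub, hx, zero_sub, le_neg, neg_zero] at h2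
  exact (hM.dotProduct_mulVec_zero_iff x).mp (le_antisymm h2 h1)


lemma kron_sub_right {l q : Type*} (A : Matrix m l ℂ) (B C : Matrix p q ℂ) :
    A ⊗ₖ (B - C) = A ⊗ₖ B - A ⊗ₖ C := by
  ext ⟨i, j⟩ ⟨k, l⟩
  simp [Matrix.kroneckerMap_apply, mul_sub]

lemma kron_sub_left {l q : Type*} (A B : Matrix m l ℂ) (C : Matrix p q ℂ) :
    (A - B) ⊗ₖ C = A ⊗ₖ C - B ⊗ₖ C := by
  ext ⟨i, j⟩ ⟨k, l⟩
  simp [Matrix.kroneckerMap_apply, sub_mul]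

lemma veronese (a b : m → ℂ) :
    vecMulVec (fun ij : m × m => a ij.1 * b ij.2 - b ij.1 * a ij.2)
        (star (fun ij : m × m => a ij.1 * b ij.2 - b ij.1 * a ij.2))
      = vecMulVec a (star a) ⊗ₖ vecMulVec b (star b)
        + vecMulVec b (star b) ⊗ₖ vecMulVec a (star a)
        - vecMulVec a (star b) ⊗ₖ vecMulVec b (star a)
        - vecMulVec b (star a) ⊗ₖ vecMulVec a (star b) := by
  ext ⟨i, j⟩ ⟨k, l⟩
  simp only [vecMulVec_apply, Pi.star_apply, kroneckerMap_apply, Matrix.add_apply,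
    Matrix.sub_apply, star_sub, star_mul', Complex.star_def, map_sub, _root_.map_mul]
  ring

noncomputable section
variable {n : ℕ}

def vv (i0 i1 : Fin n) (α β : ℂ) : Fin n → ℂ := Pi.single i0 α + Pi.single i1 β

lemma star_vv (i0 i1 : Fin n) (α β : ℂ) :
    star (vv i0 i1 α β) = vv i0 i1 (starRingEnd ℂ α) (starRingEnd ℂ β) := by
  ext t
  simp only [vv, Pi.star_apply, Pi.add_apply, Pi.single_apply, star_add]
  split_ifs <;> simp [Complex.star_def]

lemma vv_dot (i0 i1 : Fin n) (α β : ℂ) (x : Fin n → ℂ) :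
    vv i0 i1 α β ⬝ᵥ x = α * x i0 + β * x i1 := by
  simp [vv, add_dotProduct, single_dotProduct]

lemma vv_apply_ne (i0 i1 : Fin n) (α β : ℂ) (j : Fin n) (h0 : j ≠ i0) (h1 : j ≠ i1) :
    vv i0 i1 α β j = 0 := by
  simp [vv, Pi.single_apply, h0, h1]

lemma vv_apply_i0 {i0 i1 : Fin n} (hne : i0 ≠ i1) (α β : ℂ) : vv i0 i1 α β i0 = α := by
  simp [vv, Pi.single_apply, hne.symm]

lemma vv_apply_i1 {i0 i1 : Fin n} (hne : i0 ≠ i1) (α β : ℂ) : vv i0 i1 α β i1 = β := by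
  simp [vv, Pi.single_apply, hne]

lemma vv_decomp (i0 i1 : Fin n) (α β : ℂ) :
    vv i0 i1 α β = α • vv i0 i1 1 0 + β • vv i0 i1 0 1 := by
  ext t
  simp only [vv, Pi.add_apply, Pi.smul_apply, Pi.single_apply, smul_eq_mul]
  split_ifs <;> ring

lemma ker_span {i0 i1 : Fin n} (hne : i0 ≠ i1) {M : Matrix (Fin n) (Fin n) ℂ} {α β : ℂ}
    (hN : (starRingEnd ℂ) α * α + (starRingEnd ℂ) β * β ≠ 0)
    (hker : ∀ x, star (vv i0 i1 α β) ⬝ᵥ x = 0 → M *ᵥ x = 0)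
    (hv : M *ᵥ vv i0 i1 α β = 0) : M = 0 := by
  have hxv : M *ᵥ vv i0 i1 (starRingEnd ℂ β) (-(starRingEnd ℂ) α) = 0 := by
    apply hker
    rw [star_vv, vv_dot, vv_apply_i0 hne, vv_apply_i1 hne]
    ring
  have hc0 : M *ᵥ (Pi.single i0 1 : Fin n → ℂ) = 0 := by
    have hcomb : ((starRingEnd ℂ) α * α + (starRingEnd ℂ) β * β) • (Pi.single i0 1 : Fin n → ℂ)
        = (starRingEnd ℂ) α • vv i0 i1 α β
          + β • vv i0 i1 (starRingEnd ℂ β) (-(starRingEnd ℂ) α) := by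
      ext t
      simp only [vv, Pi.add_apply, Pi.smul_apply, Pi.single_apply, smul_eq_mul]
      split_ifs <;> first | ring | simp_all
    have h2 := congrArg (fun y => M *ᵥ y) hcomb
    simp only [Matrix.mulVec_smul, Matrix.mulVec_add, hv, hxv, smul_zero, add_zero] at h2
    exact (smul_eq_zero.mp h2).resolve_left hN
  have hc1 : M *ᵥ (Pi.single i1 1 : Fin n → ℂ) = 0 := by
    have hcomb : ((starRingEnd ℂ) α * α + (starRingEnd ℂ) β * β) • (Pi.single i1 1 : Fin n → ℂ)
        = (starRingEnd ℂ) β • vv i0 i1 α β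
          - α • vv i0 i1 (starRingEnd ℂ β) (-(starRingEnd ℂ) α) := by
      ext t
      simp only [vv, Pi.add_apply, Pi.sub_apply, Pi.smul_apply, Pi.single_apply, smul_eq_mul]
      split_ifs <;> first | ring | simp_all
    have h2 := congrArg (fun y => M *ᵥ y) hcomb
    simp only [Matrix.mulVec_smul, Matrix.mulVec_sub, hv, hxv, smul_zero, sub_zero] at h2
    exact (smul_eq_zero.mp h2).resolve_left hN
  have hcols : ∀ j : Fin n, M *ᵥ (Pi.single j 1 : Fin n → ℂ) = 0 := by
    intro j
    rcases eq_or_ne j i0 with h0 | h0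
    · rw [h0]; exact hc0
    rcases eq_or_ne j i1 with h1 | h1
    · rw [h1]; exact hc1
    · apply hker
      rw [star_vv, vv_dot]
      simp [Pi.single_apply, Ne.symm h0, Ne.symm h1]
  ext i j
  simpa [Matrix.mulVec_single] using congrFun (hcols j) i

def PRJ (i0 i1 : Fin n) (α β : ℂ) : Matrix (Fin n) (Fin n) ℂ :=
  ((starRingEnd ℂ) α * α + (starRingEnd ℂ) β * β)⁻¹ •
    vecMulVec (vv i0 i1 α β) (star (vv i0 i1 α β))

lemma dot_star_vv {i0 i1 : Fin n} (hne : i0 ≠ i1) (α β γ δ : ℂ) :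
    star (vv i0 i1 α β) ⬝ᵥ vv i0 i1 γ δ
      = (starRingEnd ℂ) α * γ + (starRingEnd ℂ) β * δ := by
  rw [star_vv, vv_dot, vv_apply_i0 hne, vv_apply_i1 hne]

lemma conj_N (α β : ℂ) :
    (starRingEnd ℂ) ((starRingEnd ℂ) α * α + (starRingEnd ℂ) β * β)
      = (starRingEnd ℂ) α * α + (starRingEnd ℂ) β * β := by
  simp [map_add, _root_.map_mul, mul_comm]

lemma PRJ_herm (i0 i1 : Fin n) (α β : ℂ) : (PRJ i0 i1 α β)ᴴ = PRJ i0 i1 α β := by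
  unfold PRJ
  rw [Matrix.conjTranspose_smul, vmv_herm]
  congr 1
  rw [star_inv₀, Complex.star_def, conj_N]

lemma PRJ_idem {i0 i1 : Fin n} (hne : i0 ≠ i1) {α β : ℂ}
    (hN : (starRingEnd ℂ) α * α + (starRingEnd ℂ) β * β ≠ 0) :
    PRJ i0 i1 α β * PRJ i0 i1 α β = PRJ i0 i1 α β := by
  unfold PRJ
  rw [Matrix.smul_mul, Matrix.mul_smul, vmv_mul, dot_star_vv hne, smul_smul, smul_smul]
  congr 1
  field_simp

lemma PRJ_psd {i0 i1 : Fin n} (hne : i0 ≠ i1) {α β : ℂ}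
    (hN : (starRingEnd ℂ) α * α + (starRingEnd ℂ) β * β ≠ 0) :
    (PRJ i0 i1 α β).PosSemidef :=
  psd_of_proj (PRJ_herm i0 i1 α β) (PRJ_idem hne hN)

lemma PRJ_compl_psd {i0 i1 : Fin n} (hne : i0 ≠ i1) {α β : ℂ}
    (hN : (starRingEnd ℂ) α * α + (starRingEnd ℂ) β * β ≠ 0) :
    (1 - PRJ i0 i1 α β).PosSemidef := by
  apply psd_of_proj
  · rw [Matrix.conjTranspose_sub, Matrix.conjTranspose_one, PRJ_herm]
  · simp only [Matrix.mul_sub, Matrix.sub_mul, Matrix.mul_one, Matrix.one_mul,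
      PRJ_idem hne hN]
    abel

lemma PRJ_mulVec_ker {i0 i1 : Fin n} (α β : ℂ) (x : Fin n → ℂ)
    (hx : star (vv i0 i1 α β) ⬝ᵥ x = 0) : PRJ i0 i1 α β *ᵥ x = 0 := by
  unfold PRJ
  rw [Matrix.smul_mulVec, vmv_mulVec, hx, zero_smul, smul_zero]

lemma PRJ_mulVec_ortho {i0 i1 : Fin n} (hne : i0 ≠ i1) {α β α' β' : ℂ}
    (horth : (starRingEnd ℂ) α' * α + (starRingEnd ℂ) β' * β = 0) :
    PRJ i0 i1 α' β' *ᵥ vv i0 i1 α β = 0 :=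
  PRJ_mulVec_ker _ _ _ (by rw [dot_star_vv hne, horth])

lemma PRJ_mulVec_self {i0 i1 : Fin n} (hne : i0 ≠ i1) {α β : ℂ}
    (hN : (starRingEnd ℂ) α * α + (starRingEnd ℂ) β * β ≠ 0) :
    PRJ i0 i1 α β *ᵥ vv i0 i1 α β = vv i0 i1 α β := by
  unfold PRJ
  rw [Matrix.smul_mulVec, vmv_mulVec, dot_star_vv hne, smul_smul,
    inv_mul_cancel₀ hN, one_smul]

lemma PRJ_compl_mulVec_self {i0 i1 : Fin n} (hne : i0 ≠ i1) {α β : ℂ}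
    (hN : (starRingEnd ℂ) α * α + (starRingEnd ℂ) β * β ≠ 0) :
    (1 - PRJ i0 i1 α β) *ᵥ vv i0 i1 α β = 0 := by
  rw [Matrix.sub_mulVec, Matrix.one_mulVec, PRJ_mulVec_self hne hN, sub_self]

lemma V_expand {i0 i1 : Fin n} (α β : ℂ) :
    vecMulVec (vv i0 i1 α β) (star (vv i0 i1 α β))
      = (α * (starRingEnd ℂ) α) • vecMulVec (vv i0 i1 1 0) (star (vv i0 i1 1 0))
      + (α * (starRingEnd ℂ) β) • vecMulVec (vv i0 i1 1 0) (star (vv i0 i1 0 1))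
      + (β * (starRingEnd ℂ) α) • vecMulVec (vv i0 i1 0 1) (star (vv i0 i1 1 0))
      + (β * (starRingEnd ℂ) β) • vecMulVec (vv i0 i1 0 1) (star (vv i0 i1 0 1)) := by
  ext i j
  simp only [vv, Matrix.add_apply, Matrix.smul_apply, vecMulVec_apply, Pi.star_apply,
    Pi.add_apply, Pi.single_apply, smul_eq_mul, star_add]
  split_ifs <;> simp [Complex.star_def] <;> ring


end
end NoDupAux

open NoDupAux

/-- For `n ≥ 2`, the matrix algebra `Mₙ(ℂ)` admits no duplicator, identifying
`Mₙ(ℂ) ⊗ Mₙ(ℂ)` with matrices indexed by `Fin n × Fin n` via the Kronecker product. -/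
theorem matrix_algebra_has_no_duplicator (n : ℕ) (hn : 2 ≤ n) :
    ¬ ∃ μ : Matrix (Fin n × Fin n) (Fin n × Fin n) ℂ →ₗ[ℂ] Matrix (Fin n) (Fin n) ℂ,
      (∀ M, M.PosSemidef → (μ M).PosSemidef) ∧
      μ ((1 : Matrix (Fin n) (Fin n) ℂ) ⊗ₖ (1 : Matrix (Fin n) (Fin n) ℂ)) = 1 ∧
      (∀ a : Matrix (Fin n) (Fin n) ℂ, μ ((1 : Matrix (Fin n) (Fin n) ℂ) ⊗ₖ a) = a ∧
        μ (a ⊗ₖ (1 : Matrix (Fin n) (Fin n) ℂ)) = a) ∧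
      ∀ a b c : Matrix (Fin n) (Fin n) ℂ,
        μ (a ⊗ₖ μ (b ⊗ₖ c)) = μ ((μ (a ⊗ₖ b)) ⊗ₖ c) := by
  rintro ⟨μ, hpos, hunit, hmarg, -⟩
  have h0n : 0 < n := by omega
  have h1n : 1 < n := by omega
  set i0 : Fin n := ⟨0, h0n⟩ with hi0
  set i1 : Fin n := ⟨1, h1n⟩ with hi1
  have hne : i0 ≠ i1 := fun h => by simpa [hi0, hi1, Fin.ext_iff] using h
  -- the key vanishing lemma
  have key : ∀ (e f : Matrix (Fin n) (Fin n) ℂ) (α β : ℂ),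
      e.PosSemidef → f.PosSemidef →
      ((1 : Matrix (Fin n) (Fin n) ℂ) - e).PosSemidef →
      ((1 : Matrix (Fin n) (Fin n) ℂ) - f).PosSemidef →
      ((starRingEnd ℂ) α * α + (starRingEnd ℂ) β * β ≠ 0) →
      (∀ x, star (vv i0 i1 α β) ⬝ᵥ x = 0 → e *ᵥ x = 0) →
      (f *ᵥ vv i0 i1 α β = 0) →
      μ (e ⊗ₖ f) = 0 := by
    intro e f α β he hf h1e h1f hN hker hfv
    have hM : (μ (e ⊗ₖ f)).PosSemidef := hpos _ (psd_kron he hf)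
    have heM : (e - μ (e ⊗ₖ f)).PosSemidef := by
      have h2 := hpos _ (psd_kron he h1f)
      rwa [kron_sub_right, map_sub, (hmarg e).2] at h2
    have hfM : (f - μ (e ⊗ₖ f)).PosSemidef := by
      have h2 := hpos _ (psd_kron h1e hf)
      rwa [kron_sub_left, map_sub, (hmarg f).1] at h2
    refine ker_span hne hN (fun x hx => qf_zero_of_le hM heM ?_)
      (qf_zero_of_le hM hfM ?_)
    · rw [hker x hx, dotProduct_zero]
    · rw [hfv, dotProduct_zero]
  -- norms
  have hN1 : (starRingEnd ℂ) 1 * 1 + (starRingEnd ℂ) 0 * 0 ≠ 0 := by simp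
  have hN2 : (starRingEnd ℂ) 0 * 0 + (starRingEnd ℂ) 1 * 1 ≠ 0 := by simp
  have hN3 : (starRingEnd ℂ) 1 * 1 + (starRingEnd ℂ) 1 * 1 ≠ 0 := by
    simp
  have hN4 : (starRingEnd ℂ) 1 * 1 + (starRingEnd ℂ) (-1) * (-1) ≠ 0 := by
    simp
  have hN5 : (starRingEnd ℂ) 1 * 1 + (starRingEnd ℂ) Complex.I * Complex.I ≠ 0 := by
    simp [Complex.conj_I, Complex.I_mul_I]
  have hN6 : (starRingEnd ℂ) 1 * 1 + (starRingEnd ℂ) (-Complex.I) * (-Complex.I) ≠ 0 := by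
    simp [Complex.conj_I, Complex.I_mul_I]
  -- μ on orthogonal pairs
  have orth : ∀ (α β α' β' : ℂ),
      ((starRingEnd ℂ) α * α + (starRingEnd ℂ) β * β ≠ 0) →
      ((starRingEnd ℂ) α' * α' + (starRingEnd ℂ) β' * β' ≠ 0) →
      ((starRingEnd ℂ) α' * α + (starRingEnd ℂ) β' * β = 0) →
      μ (PRJ i0 i1 α β ⊗ₖ PRJ i0 i1 α' β') = 0 := by
    intro α β α' β' hN hN' horth
    exact key _ _ α β (PRJ_psd hne hN) (PRJ_psd hne hN') (PRJ_compl_psd hne hN)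
      (PRJ_compl_psd hne hN') hN (fun x hx => PRJ_mulVec_ker _ _ x hx)
      (PRJ_mulVec_ortho hne horth)
  -- μ on a projection paired with itself
  have self : ∀ (α β : ℂ),
      ((starRingEnd ℂ) α * α + (starRingEnd ℂ) β * β ≠ 0) →
      μ (PRJ i0 i1 α β ⊗ₖ PRJ i0 i1 α β) = PRJ i0 i1 α β := by
    intro α β hN
    have h0 : μ (PRJ i0 i1 α β ⊗ₖ ((1 : Matrix (Fin n) (Fin n) ℂ) - PRJ i0 i1 α β)) = 0 :=
      key _ _ α β (PRJ_psd hne hN) (PRJ_compl_psd hne hN) (PRJ_compl_psd hne hN)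
        (by rw [sub_sub_cancel]; exact PRJ_psd hne hN) hN
        (fun x hx => PRJ_mulVec_ker _ _ x hx) (PRJ_compl_mulVec_self hne hN)
    rw [kron_sub_right, map_sub, (hmarg _).2] at h0
    exact (sub_eq_zero.mp h0).symm
  -- abbreviations (textual): a = vv i0 i1 1 0, b = vv i0 i1 0 1
  -- p, q, X, Y
  have hVP : ∀ (α β : ℂ), ((starRingEnd ℂ) α * α + (starRingEnd ℂ) β * β ≠ 0) →
      vecMulVec (vv i0 i1 α β) (star (vv i0 i1 α β))
        = ((starRingEnd ℂ) α * α + (starRingEnd ℂ) β * β) • PRJ i0 i1 α β := by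
    intro α β hN
    unfold PRJ
    rw [smul_smul, mul_inv_cancel₀ hN, one_smul]
  have hp : PRJ i0 i1 1 0 = vecMulVec (vv i0 i1 1 0) (star (vv i0 i1 1 0)) := by
    unfold PRJ; simp
  have hq : PRJ i0 i1 0 1 = vecMulVec (vv i0 i1 0 1) (star (vv i0 i1 0 1)) := by
    unfold PRJ; simp
  have hV3 : vecMulVec (vv i0 i1 1 1) (star (vv i0 i1 1 1)) = (2:ℂ) • PRJ i0 i1 1 1 := by
    rw [hVP 1 1 hN3]; congr 1; simp; norm_num
  have hV4 : vecMulVec (vv i0 i1 1 (-1)) (star (vv i0 i1 1 (-1)))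
      = (2:ℂ) • PRJ i0 i1 1 (-1) := by
    rw [hVP 1 (-1) hN4]; congr 1; simp; norm_num
  have hV5 : vecMulVec (vv i0 i1 1 Complex.I) (star (vv i0 i1 1 Complex.I))
      = (2:ℂ) • PRJ i0 i1 1 Complex.I := by
    rw [hVP 1 Complex.I hN5]; congr 1
    simp [Complex.conj_I, Complex.I_mul_I]; norm_num
  have hV6 : vecMulVec (vv i0 i1 1 (-Complex.I)) (star (vv i0 i1 1 (-Complex.I)))
      = (2:ℂ) • PRJ i0 i1 1 (-Complex.I) := by
    rw [hVP 1 (-Complex.I) hN6]; congr 1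
    simp [Complex.conj_I, Complex.I_mul_I]; norm_num
  -- μ on the V's
  have c33 : μ (vecMulVec (vv i0 i1 1 1) (star (vv i0 i1 1 1))
      ⊗ₖ vecMulVec (vv i0 i1 1 1) (star (vv i0 i1 1 1)))
      = (2:ℂ) • vecMulVec (vv i0 i1 1 1) (star (vv i0 i1 1 1)) := by
    rw [hV3, smul_kronecker, kronecker_smul, _root_.map_smul, _root_.map_smul, self 1 1 hN3, smul_smul]
  have c44 : μ (vecMulVec (vv i0 i1 1 (-1)) (star (vv i0 i1 1 (-1)))
      ⊗ₖ vecMulVec (vv i0 i1 1 (-1)) (star (vv i0 i1 1 (-1))))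
      = (2:ℂ) • vecMulVec (vv i0 i1 1 (-1)) (star (vv i0 i1 1 (-1))) := by
    rw [hV4, smul_kronecker, kronecker_smul, _root_.map_smul, _root_.map_smul, self 1 (-1) hN4, smul_smul]
  have c55 : μ (vecMulVec (vv i0 i1 1 Complex.I) (star (vv i0 i1 1 Complex.I))
      ⊗ₖ vecMulVec (vv i0 i1 1 Complex.I) (star (vv i0 i1 1 Complex.I)))
      = (2:ℂ) • vecMulVec (vv i0 i1 1 Complex.I) (star (vv i0 i1 1 Complex.I)) := by
    rw [hV5, smul_kronecker, kronecker_smul, _root_.map_smul, _root_.map_smul, self 1 Complex.I hN5,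
      smul_smul]
  have c66 : μ (vecMulVec (vv i0 i1 1 (-Complex.I)) (star (vv i0 i1 1 (-Complex.I)))
      ⊗ₖ vecMulVec (vv i0 i1 1 (-Complex.I)) (star (vv i0 i1 1 (-Complex.I))))
      = (2:ℂ) • vecMulVec (vv i0 i1 1 (-Complex.I)) (star (vv i0 i1 1 (-Complex.I))) := by
    rw [hV6, smul_kronecker, kronecker_smul, _root_.map_smul, _root_.map_smul,
      self 1 (-Complex.I) hN6, smul_smul]
  have c34 : μ (vecMulVec (vv i0 i1 1 1) (star (vv i0 i1 1 1))
      ⊗ₖ vecMulVec (vv i0 i1 1 (-1)) (star (vv i0 i1 1 (-1)))) = 0 := by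
    rw [hV3, hV4, smul_kronecker, kronecker_smul, _root_.map_smul, _root_.map_smul,
      orth 1 1 1 (-1) hN3 hN4 (by simp), smul_zero, smul_zero]
  have c43 : μ (vecMulVec (vv i0 i1 1 (-1)) (star (vv i0 i1 1 (-1)))
      ⊗ₖ vecMulVec (vv i0 i1 1 1) (star (vv i0 i1 1 1))) = 0 := by
    rw [hV3, hV4, smul_kronecker, kronecker_smul, _root_.map_smul, _root_.map_smul,
      orth 1 (-1) 1 1 hN4 hN3 (by simp), smul_zero, smul_zero]
  have c56 : μ (vecMulVec (vv i0 i1 1 Complex.I) (star (vv i0 i1 1 Complex.I))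
      ⊗ₖ vecMulVec (vv i0 i1 1 (-Complex.I)) (star (vv i0 i1 1 (-Complex.I)))) = 0 := by
    rw [hV5, hV6, smul_kronecker, kronecker_smul, _root_.map_smul, _root_.map_smul,
      orth 1 Complex.I 1 (-Complex.I) hN5 hN6
        (by simp [Complex.conj_I, Complex.I_mul_I]), smul_zero, smul_zero]
  have c65 : μ (vecMulVec (vv i0 i1 1 (-Complex.I)) (star (vv i0 i1 1 (-Complex.I)))
      ⊗ₖ vecMulVec (vv i0 i1 1 Complex.I) (star (vv i0 i1 1 Complex.I))) = 0 := by
    rw [hV5, hV6, smul_kronecker, kronecker_smul, _root_.map_smul, _root_.map_smul,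
      orth 1 (-Complex.I) 1 Complex.I hN6 hN5
        (by simp [Complex.conj_I, Complex.I_mul_I]), smul_zero, smul_zero]
  -- expansions
  have hH : vecMulVec (vv i0 i1 1 1) (star (vv i0 i1 1 1))
      - vecMulVec (vv i0 i1 1 (-1)) (star (vv i0 i1 1 (-1)))
      = (2:ℂ) • (vecMulVec (vv i0 i1 1 0) (star (vv i0 i1 0 1))
        + vecMulVec (vv i0 i1 0 1) (star (vv i0 i1 1 0))) := by
    rw [V_expand (α := 1) (β := 1), V_expand (α := 1) (β := (-1))]
    simp only [_root_.map_one, _root_.map_neg, one_mul, mul_one, neg_neg, mul_neg, neg_mul, one_smul,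
      neg_smul]
    module
  have hsum3 : vecMulVec (vv i0 i1 1 1) (star (vv i0 i1 1 1))
      + vecMulVec (vv i0 i1 1 (-1)) (star (vv i0 i1 1 (-1)))
      = (2:ℂ) • (vecMulVec (vv i0 i1 1 0) (star (vv i0 i1 1 0))
        + vecMulVec (vv i0 i1 0 1) (star (vv i0 i1 0 1))) := by
    rw [V_expand (α := 1) (β := 1), V_expand (α := 1) (β := (-1))]
    simp only [_root_.map_one, _root_.map_neg, one_mul, mul_one, neg_neg, mul_neg, neg_mul, one_smul,
      neg_smul]
    module
  have hK : vecMulVec (vv i0 i1 1 Complex.I) (star (vv i0 i1 1 Complex.I))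
      - vecMulVec (vv i0 i1 1 (-Complex.I)) (star (vv i0 i1 1 (-Complex.I)))
      = (2 * Complex.I) • (vecMulVec (vv i0 i1 0 1) (star (vv i0 i1 1 0))
        - vecMulVec (vv i0 i1 1 0) (star (vv i0 i1 0 1))) := by
    rw [V_expand (α := 1) (β := Complex.I), V_expand (α := 1) (β := (-Complex.I))]
    simp only [_root_.map_one, _root_.map_neg, Complex.conj_I, one_mul, mul_one, neg_neg, mul_neg,
      neg_mul, one_smul, neg_smul, Complex.I_mul_I]
    module
  have hsum5 : vecMulVec (vv i0 i1 1 Complex.I) (star (vv i0 i1 1 Complex.I))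
      + vecMulVec (vv i0 i1 1 (-Complex.I)) (star (vv i0 i1 1 (-Complex.I)))
      = (2:ℂ) • (vecMulVec (vv i0 i1 1 0) (star (vv i0 i1 1 0))
        + vecMulVec (vv i0 i1 0 1) (star (vv i0 i1 0 1))) := by
    rw [V_expand (α := 1) (β := Complex.I), V_expand (α := 1) (β := (-Complex.I))]
    simp only [_root_.map_one, _root_.map_neg, Complex.conj_I, one_mul, mul_one, neg_neg, mul_neg,
      neg_mul, one_smul, neg_smul, Complex.I_mul_I]
    module
  -- μ((X+Y)⊗(X+Y)) = p + q
  have muH : μ ((vecMulVec (vv i0 i1 1 0) (star (vv i0 i1 0 1))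
        + vecMulVec (vv i0 i1 0 1) (star (vv i0 i1 1 0)))
      ⊗ₖ (vecMulVec (vv i0 i1 1 0) (star (vv i0 i1 0 1))
        + vecMulVec (vv i0 i1 0 1) (star (vv i0 i1 1 0))))
      = vecMulVec (vv i0 i1 1 0) (star (vv i0 i1 1 0))
        + vecMulVec (vv i0 i1 0 1) (star (vv i0 i1 0 1)) := by
    have e2 : μ ((vecMulVec (vv i0 i1 1 1) (star (vv i0 i1 1 1))
        - vecMulVec (vv i0 i1 1 (-1)) (star (vv i0 i1 1 (-1))))
        ⊗ₖ (vecMulVec (vv i0 i1 1 1) (star (vv i0 i1 1 1))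
        - vecMulVec (vv i0 i1 1 (-1)) (star (vv i0 i1 1 (-1)))))
        = (4:ℂ) • (vecMulVec (vv i0 i1 1 0) (star (vv i0 i1 1 0))
          + vecMulVec (vv i0 i1 0 1) (star (vv i0 i1 0 1))) := by
      rw [kron_sub_left, kron_sub_right, kron_sub_right, map_sub, map_sub, map_sub,
        c33, c34, c43, c44, sub_zero, zero_sub, sub_neg_eq_add, ← smul_add, hsum3,
        smul_smul]
      norm_num
    rw [hH] at e2
    rw [smul_kronecker, kronecker_smul, _root_.map_smul, _root_.map_smul, smul_smul] at e2
    have h22 : (2:ℂ) * 2 = 4 := by norm_num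
    rw [h22] at e2
    exact smul_right_injective (Matrix (Fin n) (Fin n) ℂ) (by norm_num : (4:ℂ) ≠ 0) e2
  -- μ((Y−X)⊗(Y−X)) = −(p + q)
  have muK : μ ((vecMulVec (vv i0 i1 0 1) (star (vv i0 i1 1 0))
        - vecMulVec (vv i0 i1 1 0) (star (vv i0 i1 0 1)))
      ⊗ₖ (vecMulVec (vv i0 i1 0 1) (star (vv i0 i1 1 0))
        - vecMulVec (vv i0 i1 1 0) (star (vv i0 i1 0 1))))
      = -(vecMulVec (vv i0 i1 1 0) (star (vv i0 i1 1 0))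
        + vecMulVec (vv i0 i1 0 1) (star (vv i0 i1 0 1))) := by
    have e2 : μ ((vecMulVec (vv i0 i1 1 Complex.I) (star (vv i0 i1 1 Complex.I))
        - vecMulVec (vv i0 i1 1 (-Complex.I)) (star (vv i0 i1 1 (-Complex.I))))
        ⊗ₖ (vecMulVec (vv i0 i1 1 Complex.I) (star (vv i0 i1 1 Complex.I))
        - vecMulVec (vv i0 i1 1 (-Complex.I)) (star (vv i0 i1 1 (-Complex.I)))))
        = (4:ℂ) • (vecMulVec (vv i0 i1 1 0) (star (vv i0 i1 1 0))
          + vecMulVec (vv i0 i1 0 1) (star (vv i0 i1 0 1))) := by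
      rw [kron_sub_left, kron_sub_right, kron_sub_right, map_sub, map_sub, map_sub,
        c55, c56, c65, c66, sub_zero, zero_sub, sub_neg_eq_add, ← smul_add, hsum5,
        smul_smul]
      norm_num
    rw [hK] at e2
    rw [smul_kronecker, kronecker_smul, _root_.map_smul, _root_.map_smul, smul_smul] at e2
    have hsc : (2 * Complex.I) * (2 * Complex.I) = -4 := by
      ring_nf
      simp [Complex.I_sq]
    rw [hsc] at e2
    have e3 : (-4 : ℂ) • μ ((vecMulVec (vv i0 i1 0 1) (star (vv i0 i1 1 0))
        - vecMulVec (vv i0 i1 1 0) (star (vv i0 i1 0 1)))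
      ⊗ₖ (vecMulVec (vv i0 i1 0 1) (star (vv i0 i1 1 0))
        - vecMulVec (vv i0 i1 1 0) (star (vv i0 i1 0 1))))
        = (-4 : ℂ) • (-(vecMulVec (vv i0 i1 1 0) (star (vv i0 i1 1 0))
          + vecMulVec (vv i0 i1 0 1) (star (vv i0 i1 0 1)))) := by
      rw [e2, smul_neg, neg_smul, neg_neg]
    exact smul_right_injective (Matrix (Fin n) (Fin n) ℂ) (by norm_num : (-4:ℂ) ≠ 0) e3
  -- μ(X⊗Y + Y⊗X) = p + q
  have mufinal : μ (vecMulVec (vv i0 i1 1 0) (star (vv i0 i1 0 1))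
        ⊗ₖ vecMulVec (vv i0 i1 0 1) (star (vv i0 i1 1 0)))
      + μ (vecMulVec (vv i0 i1 0 1) (star (vv i0 i1 1 0))
        ⊗ₖ vecMulVec (vv i0 i1 1 0) (star (vv i0 i1 0 1)))
      = vecMulVec (vv i0 i1 1 0) (star (vv i0 i1 1 0))
        + vecMulVec (vv i0 i1 0 1) (star (vv i0 i1 0 1)) := by
    have hid : ((vecMulVec (vv i0 i1 1 0) (star (vv i0 i1 0 1))
        + vecMulVec (vv i0 i1 0 1) (star (vv i0 i1 1 0)))
      ⊗ₖ (vecMulVec (vv i0 i1 1 0) (star (vv i0 i1 0 1))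
        + vecMulVec (vv i0 i1 0 1) (star (vv i0 i1 1 0))))
      - ((vecMulVec (vv i0 i1 0 1) (star (vv i0 i1 1 0))
        - vecMulVec (vv i0 i1 1 0) (star (vv i0 i1 0 1)))
      ⊗ₖ (vecMulVec (vv i0 i1 0 1) (star (vv i0 i1 1 0))
        - vecMulVec (vv i0 i1 1 0) (star (vv i0 i1 0 1))))
      = (2:ℂ) • (vecMulVec (vv i0 i1 1 0) (star (vv i0 i1 0 1))
          ⊗ₖ vecMulVec (vv i0 i1 0 1) (star (vv i0 i1 1 0))
        + vecMulVec (vv i0 i1 0 1) (star (vv i0 i1 1 0))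
          ⊗ₖ vecMulVec (vv i0 i1 1 0) (star (vv i0 i1 0 1))) := by
      simp only [Matrix.add_kronecker, Matrix.kronecker_add, kron_sub_left,
        kron_sub_right, two_smul]
      abel
    have h2 := congrArg μ hid
    rw [map_sub, muH, muK, sub_neg_eq_add, _root_.map_smul] at h2
    have h2' : (2:ℂ) • (vecMulVec (vv i0 i1 1 0) (star (vv i0 i1 1 0))
        + vecMulVec (vv i0 i1 0 1) (star (vv i0 i1 0 1)))
        = (2:ℂ) • μ (vecMulVec (vv i0 i1 1 0) (star (vv i0 i1 0 1))
          ⊗ₖ vecMulVec (vv i0 i1 0 1) (star (vv i0 i1 1 0))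
        + vecMulVec (vv i0 i1 0 1) (star (vv i0 i1 1 0))
          ⊗ₖ vecMulVec (vv i0 i1 1 0) (star (vv i0 i1 0 1))) := by
      rw [← h2, two_smul]
    have h2'' := (smul_right_injective (Matrix (Fin n) (Fin n) ℂ)
      (by norm_num : (2:ℂ) ≠ 0) h2').symm
    rw [map_add] at h2''
    exact h2''
  -- the PSD witness
  have hGpsd := hpos _ (psd_vmv (fun ij : Fin n × Fin n =>
    (vv i0 i1 1 0) ij.1 * (vv i0 i1 0 1) ij.2 - (vv i0 i1 0 1) ij.1 * (vv i0 i1 1 0) ij.2))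
  rw [veronese] at hGpsd
  have hm1 : μ (vecMulVec (vv i0 i1 1 0) (star (vv i0 i1 1 0))
      ⊗ₖ vecMulVec (vv i0 i1 0 1) (star (vv i0 i1 0 1))) = 0 := by
    have := orth 1 0 0 1 hN1 hN2 (by simp)
    rwa [hp, hq] at this
  have hm2 : μ (vecMulVec (vv i0 i1 0 1) (star (vv i0 i1 0 1))
      ⊗ₖ vecMulVec (vv i0 i1 1 0) (star (vv i0 i1 1 0))) = 0 := by
    have := orth 0 1 1 0 hN2 hN1 (by simp)
    rwa [hp, hq] at this
  have hval : μ (vecMulVec (vv i0 i1 1 0) (star (vv i0 i1 1 0))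
        ⊗ₖ vecMulVec (vv i0 i1 0 1) (star (vv i0 i1 0 1))
      + vecMulVec (vv i0 i1 0 1) (star (vv i0 i1 0 1))
        ⊗ₖ vecMulVec (vv i0 i1 1 0) (star (vv i0 i1 1 0))
      - vecMulVec (vv i0 i1 1 0) (star (vv i0 i1 0 1))
        ⊗ₖ vecMulVec (vv i0 i1 0 1) (star (vv i0 i1 1 0))
      - vecMulVec (vv i0 i1 0 1) (star (vv i0 i1 1 0))
        ⊗ₖ vecMulVec (vv i0 i1 1 0) (star (vv i0 i1 0 1)))
      = -(vecMulVec (vv i0 i1 1 0) (star (vv i0 i1 1 0))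
        + vecMulVec (vv i0 i1 0 1) (star (vv i0 i1 0 1))) := by
    rw [map_sub, map_sub, map_add, hm1, hm2, sub_sub, mufinal]
    simp
  rw [hval] at hGpsd
  have hfin := hGpsd.dotProduct_mulVec_nonneg ((Pi.single i0 1 : Fin n → ℂ))
  have hsingle : star ((Pi.single i0 1 : Fin n → ℂ)) = (Pi.single i0 1 : Fin n → ℂ) := by
    ext t
    by_cases h : t = i0 <;> simp [h, Pi.single_apply]
  have hvalqf : ((Pi.single i0 1 : Fin n → ℂ)) ⬝ᵥ
      ((-(vecMulVec (vv i0 i1 1 0) (star (vv i0 i1 1 0))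
        + vecMulVec (vv i0 i1 0 1) (star (vv i0 i1 0 1)))) *ᵥ (Pi.single i0 1 : Fin n → ℂ)) = -1 := by
    rw [Matrix.mulVec_single, single_dotProduct]
    simp [Matrix.neg_apply, Matrix.add_apply, vecMulVec_apply, vv_apply_i0 hne]
  rw [hsingle, hvalqf] at hfin
  rw [Complex.le_def] at hfin
  norm_num at hfin
end
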